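/- Let A be a bimonoid and B a cocommutative Hopf monoid with antipode z in M, let s : A → B be a bimonoid morphism and i : B → A a monoid morphism, and set ⃗s := m_A∘(1_A⊗(i∘z∘s))∘δ_A : A → A. Then ⃗s∘m_A = m_A∘(m_A⊗(i∘z∘s))∘(1_A⊗c_{A,A})∘(δ_A⊗1_A)∘(1_A⊗⃗s) as morphisms A⊗A → A. -/

import Mathlib

open CategoryTheory Category MonoidalCategory Limits

universe v u

variable {C : Type u} [Category.{v} C] [MonoidalCategory C]

/-- The middle-four interchange `(W ⊗ X) ⊗ (Y ⊗ Z) ⟶ (W ⊗ Y) ⊗ (X ⊗ Z)`,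
i.e. `1 ⊗ c ⊗ 1` with the (suppressed) coherence isomorphisms inserted. -/
def mid4 [BraidedCategory C] (W X Y Z : C) :
    (W ⊗ X) ⊗ (Y ⊗ Z) ⟶ (W ⊗ Y) ⊗ (X ⊗ Z) :=
  (α_ W X (Y ⊗ Z)).hom ≫ (W ◁ (α_ X Y Z).inv) ≫
    (W ◁ ((β_ X Y).hom ▷ Z)) ≫ (W ◁ (α_ Y X Z).hom) ≫ (α_ W Y (X ⊗ Z)).inv

/-- A monoid structure `(A, m, u)` on the object `A`. -/
structure MonObjStr (A : C) where
  mul : A ⊗ A ⟶ A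
  one : 𝟙_ C ⟶ A
  one_mul : (one ▷ A) ≫ mul = (λ_ A).hom
  mul_one : (A ◁ one) ≫ mul = (ρ_ A).hom
  mul_assoc : (mul ▷ A) ≫ mul = (α_ A A A).hom ≫ (A ◁ mul) ≫ mul

/-- A comonoid structure `(A, δ, ε)` on the object `A`. -/
structure ComonObjStr (A : C) where
  comul : A ⟶ A ⊗ A
  counit : A ⟶ 𝟙_ C
  counit_comul : comul ≫ (counit ▷ A) = (λ_ A).inv
  comul_counit : comul ≫ (A ◁ counit) = (ρ_ A).inv
  comul_assoc : comul ≫ (comul ▷ A) ≫ (α_ A A A).hom = comul ≫ (A ◁ comul)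

/-- A bimonoid structure on the object `A`: a monoid and comonoid structure such that
the comultiplication and counit are monoid morphisms (`A ⊗ A` carrying the multiplication
`(m ⊗ m) ∘ (1 ⊗ c ⊗ 1)` and unit `u ⊗ u`). -/
structure BimonObjStr [BraidedCategory C] (A : C) extends toMonObj : MonObjStr A, toComonObj : ComonObjStr A where
  mul_comul : mul ≫ comul = (comul ⊗ₘ comul) ≫ mid4 A A A A ≫ (mul ⊗ₘ mul)
  one_comul : one ≫ comul = (λ_ (𝟙_ C)).inv ≫ (one ⊗ₘ one)
  mul_counit : mul ≫ counit = (counit ⊗ₘ counit) ≫ (λ_ (𝟙_ C)).hom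
  one_counit : one ≫ counit = 𝟙 (𝟙_ C)

/-- `f` is a morphism of monoids. -/
def IsMonHomStr {A B : C} (MA : MonObjStr A) (MB : MonObjStr B) (f : A ⟶ B) : Prop :=
  MA.mul ≫ f = (f ⊗ₘ f) ≫ MB.mul ∧ MA.one ≫ f = MB.one

/-- `f` is a morphism of comonoids. -/
def IsComonHomStr {A B : C} (MA : ComonObjStr A) (MB : ComonObjStr B) (f : A ⟶ B) : Prop :=
  f ≫ MB.comul = MA.comul ≫ (f ⊗ₘ f) ∧ f ≫ MB.counit = MA.counit

/-- `f` is a morphism of bimonoids (preserves all four structure maps). -/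
def IsBimonHomStr [BraidedCategory C] {A B : C} (MA : BimonObjStr A) (MB : BimonObjStr B)
    (f : A ⟶ B) : Prop :=
  IsMonHomStr MA.toMonObj MB.toMonObj f ∧ IsComonHomStr MA.toComonObj MB.toComonObj f

/-- `z` is an antipode for the bimonoid `M`, i.e. `M` is a Hopf monoid. -/
def IsAntipode [BraidedCategory C] {B : C} (M : BimonObjStr B) (z : B ⟶ B) : Prop :=
  M.comul ≫ (z ▷ B) ≫ M.mul = M.counit ≫ M.one ∧
    M.comul ≫ (B ◁ z) ≫ M.mul = M.counit ≫ M.one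

/-- A comonoid is cocommutative when `c ∘ δ = δ`. -/
def IsCocomm [BraidedCategory C] {A : C} (M : ComonObjStr A) : Prop :=
  M.comul ≫ (β_ A A).hom = M.comul

section Aux

variable [BraidedCategory C]

/-- The antipode is an anti-homomorphism for the multiplication. -/
theorem antipode_mul {X : C} (M : BimonObjStr X) (z : X ⟶ X) (hz : IsAntipode M z) :
    M.mul ≫ z = (z ⊗ₘ z) ≫ (β_ X X).hom ≫ M.mul := by
  letI iM : MonObj X :=
    { one := M.one, mul := M.mul,
      one_mul := M.one_mul, mul_one := M.mul_one, mul_assoc := M.mul_assoc }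
  letI iC : ComonObj X :=
    { comul := M.comul, counit := M.counit, counit_comul := M.counit_comul,
      comul_counit := M.comul_counit, comul_assoc := M.comul_assoc.symm }
  letI iH : HopfObj X :=
    { mul_comul := M.mul_comul
      one_comul := M.one_comul
      mul_counit := M.mul_counit
      one_counit := M.one_counit
      antipode := z
      antipode_left := hz.1
      antipode_right := hz.2 }
  exact HopfObj.mul_antipode X

end Aux
theorem statement6 [SymmetricCategory C] {A B : C}
    (MA : BimonObjStr A) (MB : BimonObjStr B) (z : B ⟶ B) (hz : IsAntipode MB z)
    (hcoc : IsCocomm MB.toComonObj)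
    (s : A ⟶ B) (hs : IsBimonHomStr MA MB s)
    (i : B ⟶ A) (hi : IsMonHomStr MB.toMonObj MA.toMonObj i) :
    MA.mul ≫ (MA.comul ≫ (A ◁ (s ≫ z ≫ i)) ≫ MA.mul) =
      (A ◁ (MA.comul ≫ (A ◁ (s ≫ z ≫ i)) ≫ MA.mul)) ≫ (MA.comul ▷ A) ≫
        (α_ A A A).hom ≫ (A ◁ (β_ A A).hom) ≫ (α_ A A A).inv ≫
        (MA.mul ⊗ₘ (s ≫ z ≫ i)) ≫ MA.mul := by
  obtain ⟨⟨hs_mul, -⟩, -⟩ := hs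
  obtain ⟨hi_mul, -⟩ := hi
  set f : A ⟶ A := s ≫ z ≫ i with hf_def
  have hf : MA.mul ≫ f = (β_ A A).hom ≫ (f ⊗ₘ f) ≫ MA.mul := by
    rw [show MA.mul ≫ f = (MA.mul ≫ s) ≫ z ≫ i by simp [hf_def], hs_mul]
    rw [Category.assoc]
    slice_lhs 2 3 => rw [antipode_mul MB z hz]
    slice_lhs 4 5 => rw [hi_mul]
    slice_lhs 1 2 => rw [tensorHom_comp_tensorHom]
    slice_lhs 1 2 => rw [BraidedCategory.braiding_naturality]
    slice_lhs 2 3 => rw [tensorHom_comp_tensorHom]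
    simp [hf_def]
  have hassoc : (A ◁ MA.mul) ≫ MA.mul = (α_ A A A).inv ≫ (MA.mul ▷ A) ≫ MA.mul := by
    rw [MA.mul_assoc]; simp
  trans ((MA.comul ⊗ₘ MA.comul) ≫ (α_ A A (A ⊗ A)).hom ≫ (A ◁ (β_ A (A ⊗ A)).hom) ≫
      (α_ A (A ⊗ A) A).inv ≫ ((α_ A A A).inv ▷ A) ≫ ((MA.mul ▷ A) ▷ A) ≫ ((A ◁ f) ▷ A) ≫
      (MA.mul ▷ A) ≫ (A ◁ f) ≫ MA.mul)
  · -- LHS = Mid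
    slice_lhs 1 2 => rw [MA.mul_comul]
    simp only [Category.assoc]
    slice_lhs 3 4 => rw [← id_tensorHom, tensorHom_comp_tensorHom, Category.comp_id, hf]
    rw [tensorHom_def' MA.mul ((β_ A A).hom ≫ (f ⊗ₘ f) ≫ MA.mul)]
    simp only [MonoidalCategory.whiskerLeft_comp, Category.assoc]
    slice_lhs 5 6 => rw [whisker_exchange]
    slice_lhs 6 7 => rw [hassoc]
    slice_lhs 4 5 => rw [whisker_exchange]
    slice_lhs 5 5 => rw [MonoidalCategory.tensorHom_def]
    simp only [MonoidalCategory.whiskerLeft_comp, Category.assoc]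
    slice_lhs 6 7 => rw [associator_inv_naturality_right]
    slice_lhs 7 8 => rw [whisker_exchange]
    simp only [Category.assoc]
    simp only [mid4, BraidedCategory.braiding_tensor_right_hom, MonoidalCategory.whiskerLeft_comp,
      Category.assoc]
    monoidal
  · -- Mid = RHS
    symm
    rw [whisker_exchange_assoc]
    simp only [MonoidalCategory.whiskerLeft_comp, Category.assoc]
    slice_lhs 4 5 => rw [associator_naturality_right]
    slice_lhs 3 4 => rw [associator_naturality_right]
    slice_lhs 5 6 => rw [← MonoidalCategory.whiskerLeft_comp,
      BraidedCategory.braiding_naturality_right, MonoidalCategory.whiskerLeft_comp]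
    slice_lhs 4 5 => rw [← MonoidalCategory.whiskerLeft_comp,
      BraidedCategory.braiding_naturality_right, MonoidalCategory.whiskerLeft_comp]
    slice_lhs 6 7 => rw [associator_inv_naturality_middle]
    slice_lhs 5 6 => rw [associator_inv_naturality_middle]
    rw [MonoidalCategory.tensorHom_def]
    simp only [Category.assoc]
    slice_lhs 7 8 => rw [← comp_whiskerRight, hassoc]
    simp only [comp_whiskerRight, Category.assoc]
    slice_lhs 6 7 => rw [← comp_whiskerRight, associator_inv_naturality_right]
    simp only [comp_whiskerRight, Category.assoc]
    slice_lhs 7 8 => rw [← comp_whiskerRight, whisker_exchange]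
    simp only [comp_whiskerRight, Category.assoc]
    rw [← MonoidalCategory.tensorHom_def_assoc]
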